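/- If c is a nonzero idempotent in the algebra V(u) of a cubic form u on ℝⁿ, and w(x) = 6u(x)/|x|, then the Hessian of w at c equals (1/|c|)(6L_c − id − (3/|c|²) c⊗c); consequently c is an eigenvector of D²w(c) with eigenvalue 2/|c|, and on c⊥ the spectrum of D²w(c) is {(6λ−1)/|c| : λ an eigenvalue of L_c on c⊥}. -/

import Mathlib

set_option maxHeartbeats 1000000
open RealInnerProductSpace


noncomputable def mulCLM {n : ℕ} (mul : (EuclideanSpace ℝ (Fin n)) →ₗ[ℝ] (EuclideanSpace ℝ (Fin n)) →ₗ[ℝ] (EuclideanSpace ℝ (Fin n))) : (EuclideanSpace ℝ (Fin n)) →L[ℝ] (EuclideanSpace ℝ (Fin n)) →L[ℝ] (EuclideanSpace ℝ (Fin n)) :=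
  LinearMap.toContinuousLinearMap
    { toFun := fun x => LinearMap.toContinuousLinearMap (mul x)
      map_add' := fun x y => by ext z; simp
      map_smul' := fun t x => by ext z; simp }

@[simp] lemma mulCLM_apply {n : ℕ} (mul : (EuclideanSpace ℝ (Fin n)) →ₗ[ℝ] (EuclideanSpace ℝ (Fin n)) →ₗ[ℝ] (EuclideanSpace ℝ (Fin n))) (x y : (EuclideanSpace ℝ (Fin n))) : mulCLM mul x y = mul x y := rfl

lemma hasFDerivAt_norm' {n : ℕ} {x : (EuclideanSpace ℝ (Fin n))} (hx : x ≠ 0) :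
    HasFDerivAt (fun y : (EuclideanSpace ℝ (Fin n)) => ‖y‖) ((‖x‖)⁻¹ • innerSL ℝ x) x := by
  have hq : HasFDerivAt (fun y : (EuclideanSpace ℝ (Fin n)) => ⟪y, y⟫)
      ((fderivInnerCLM ℝ (x, x)).comp ((ContinuousLinearMap.id ℝ (EuclideanSpace ℝ (Fin n))).prod
        (ContinuousLinearMap.id ℝ (EuclideanSpace ℝ (Fin n))))) x :=
    (hasFDerivAt_id x).inner ℝ (hasFDerivAt_id x)
  have hxx : ⟪x, x⟫ ≠ 0 := by
    rw [real_inner_self_eq_norm_sq]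
    exact pow_ne_zero 2 (norm_ne_zero_iff.mpr hx)
  have hs := HasDerivAt.comp_hasFDerivAt (f := fun y : (EuclideanSpace ℝ (Fin n)) => ⟪y, y⟫) x (Real.hasDerivAt_sqrt hxx) hq
  have heq : ((fun x => Real.sqrt x) ∘ fun y : (EuclideanSpace ℝ (Fin n)) => ⟪y, y⟫) = fun y : (EuclideanSpace ℝ (Fin n)) => ‖y‖ := by
    funext y; simp only [Function.comp]; rw [real_inner_self_eq_norm_sq, Real.sqrt_sq (norm_nonneg y)]
  rw [show ((fun x => Real.sqrt x) ∘ fun y : (EuclideanSpace ℝ (Fin n)) => ⟪y, y⟫) = fun y : (EuclideanSpace ℝ (Fin n)) => ‖y‖ from heq] at hs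
  refine hs.congr_fderiv ?_
  ext z
  have h1 : Real.sqrt ⟪x, x⟫ = ‖x‖ := by
    rw [real_inner_self_eq_norm_sq, Real.sqrt_sq (norm_nonneg x)]
  simp only [ContinuousLinearMap.smul_apply, ContinuousLinearMap.comp_apply,
    ContinuousLinearMap.prod_apply, ContinuousLinearMap.coe_id', id_eq, fderivInnerCLM_apply,
    innerSL_apply_apply, h1, smul_eq_mul]
  rw [real_inner_comm z x]
  have h0 : ‖x‖ ≠ 0 := norm_ne_zero_iff.mpr hx
  field_simp
  ring

/-- If `c` is a nonzero idempotent of the algebra `V(u)` of a cubic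
form on `ℝⁿ` and `w(x) = ⟪x², x⟫ / ‖x‖`, then the Hessian of `w` at `c` equals
`(1/‖c‖)(6 L_c − id − (3/‖c‖²) c⊗c)`; consequently `c` is an eigenvector of
`D²w(c)` with eigenvalue `2/‖c‖`, and an eigenvector `v ⊥ c` of `L_c` with
eigenvalue `λ` is an eigenvector of `D²w(c)` with eigenvalue `(6λ−1)/‖c‖`. -/
theorem stmt_17 {n : ℕ}
    (mul : EuclideanSpace ℝ (Fin n) →ₗ[ℝ] EuclideanSpace ℝ (Fin n) →ₗ[ℝ]
      EuclideanSpace ℝ (Fin n))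
    (hcomm : ∀ x y, mul x y = mul y x)
    (hassoc : ∀ x y z, ⟪mul x y, z⟫ = ⟪x, mul y z⟫)
    (w : EuclideanSpace ℝ (Fin n) → ℝ)
    (hw : ∀ x, w x = ⟪mul x x, x⟫ / ‖x‖)
    (c : EuclideanSpace ℝ (Fin n)) (hc : mul c c = c) (hc0 : c ≠ 0) :
    (∀ y z, fderiv ℝ (fun x => fderiv ℝ w x y) c z =
        (1 / ‖c‖) * (6 * ⟪mul c y, z⟫ - ⟪y, z⟫ - 3 / ‖c‖ ^ 2 * ⟪c, y⟫ * ⟪c, z⟫)) ∧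
      (∀ z, fderiv ℝ (fun x => fderiv ℝ w x c) c z = 2 / ‖c‖ * ⟪c, z⟫) ∧
      (∀ (v : EuclideanSpace ℝ (Fin n)) (lam : ℝ), ⟪v, c⟫ = 0 →
        mul c v = lam • v →
        ∀ z, fderiv ℝ (fun x => fderiv ℝ w x v) c z =
          (6 * lam - 1) / ‖c‖ * ⟪v, z⟫) := by
  have hsq : ∀ x : (EuclideanSpace ℝ (Fin n)), HasFDerivAt (fun y : (EuclideanSpace ℝ (Fin n)) => mul y y)
      ((mulCLM mul).precompR (EuclideanSpace ℝ (Fin n)) x (ContinuousLinearMap.id ℝ (EuclideanSpace ℝ (Fin n)))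
        + (mulCLM mul).precompL (EuclideanSpace ℝ (Fin n)) (ContinuousLinearMap.id ℝ (EuclideanSpace ℝ (Fin n))) x) x := fun x =>
    (mulCLM mul).hasFDerivAt_of_bilinear (hasFDerivAt_id x) (hasFDerivAt_id x)
  -- evaluation of that derivative
  have hsq_ap : ∀ x h : (EuclideanSpace ℝ (Fin n)), ((mulCLM mul).precompR (EuclideanSpace ℝ (Fin n)) x (ContinuousLinearMap.id ℝ (EuclideanSpace ℝ (Fin n)))
        + (mulCLM mul).precompL (EuclideanSpace ℝ (Fin n)) (ContinuousLinearMap.id ℝ (EuclideanSpace ℝ (Fin n))) x) h = mul x h + mul h x := by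
    intro x h
    simp [ContinuousLinearMap.precompR, ContinuousLinearMap.precompL]
  set Dsq := fun x : (EuclideanSpace ℝ (Fin n)) => (mulCLM mul).precompR (EuclideanSpace ℝ (Fin n)) x (ContinuousLinearMap.id ℝ (EuclideanSpace ℝ (Fin n)))
        + (mulCLM mul).precompL (EuclideanSpace ℝ (Fin n)) (ContinuousLinearMap.id ℝ (EuclideanSpace ℝ (Fin n))) x with hDsq
  have hu : ∀ x : (EuclideanSpace ℝ (Fin n)), HasFDerivAt (fun y : (EuclideanSpace ℝ (Fin n)) => ⟪mul y y, y⟫)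
      ((fderivInnerCLM ℝ (mul x x, x)).comp ((Dsq x).prod (ContinuousLinearMap.id ℝ (EuclideanSpace ℝ (Fin n))))) x :=
    fun x => (hsq x).inner ℝ (hasFDerivAt_id x)
  have hNi : ∀ x : (EuclideanSpace ℝ (Fin n)), x ≠ 0 → HasFDerivAt (fun y : (EuclideanSpace ℝ (Fin n)) => (‖y‖)⁻¹)
      ((-(‖x‖ ^ 2)⁻¹) • ((‖x‖)⁻¹ • innerSL ℝ x)) x := fun x hx =>
    (hasDerivAt_inv (norm_ne_zero_iff.mpr hx)).comp_hasFDerivAt x (hasFDerivAt_norm' hx)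
  have hwf : w = fun x : (EuclideanSpace ℝ (Fin n)) => ⟪mul x x, x⟫ * (‖x‖)⁻¹ := funext fun x => by
    rw [hw x, div_eq_mul_inv]
  have hw' : ∀ x : (EuclideanSpace ℝ (Fin n)), x ≠ 0 → HasFDerivAt w
      ((⟪mul x x, x⟫) • ((-(‖x‖ ^ 2)⁻¹) • ((‖x‖)⁻¹ • innerSL ℝ x)) + (‖x‖)⁻¹ •
        ((fderivInnerCLM ℝ (mul x x, x)).comp ((Dsq x).prod (ContinuousLinearMap.id ℝ (EuclideanSpace ℝ (Fin n)))))) x := by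
    intro x hx
    rw [hwf]
    exact (hu x).mul (hNi x hx)
  have fA : ∀ x : (EuclideanSpace ℝ (Fin n)), x ≠ 0 → ∀ y : (EuclideanSpace ℝ (Fin n)), fderiv ℝ w x y =
      3 * ⟪mul x x, y⟫ * (‖x‖)⁻¹
        - ⟪mul x x, x⟫ * ⟪x, y⟫ * ((‖x‖)⁻¹ * (‖x‖)⁻¹ * (‖x‖)⁻¹) := by
    intro x hx y
    rw [(hw' x hx).fderiv]
    have h0 : ‖x‖ ≠ 0 := norm_ne_zero_iff.mpr hx
    have e1 : ⟪mul x y, x⟫ = ⟪mul x x, y⟫ := by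
      rw [hcomm x y, hassoc, real_inner_comm]
    have e2 : ⟪mul y x, x⟫ = ⟪mul x x, y⟫ := by
      rw [hassoc, real_inner_comm]
    simp only [ContinuousLinearMap.add_apply, ContinuousLinearMap.smul_apply,
      ContinuousLinearMap.comp_apply, ContinuousLinearMap.prod_apply,
      ContinuousLinearMap.coe_id', id_eq, fderivInnerCLM_apply, innerSL_apply_apply,
      smul_eq_mul, hDsq, hsq_ap, inner_add_left, e1, e2, real_inner_comm x y]
    field_simp
    ring
  set G : (EuclideanSpace ℝ (Fin n)) → (EuclideanSpace ℝ (Fin n)) → ℝ := fun y x => 3 * ⟪mul x x, y⟫ * (‖x‖)⁻¹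
        - ⟪mul x x, x⟫ * ⟪x, y⟫ * ((‖x‖)⁻¹ * (‖x‖)⁻¹ * (‖x‖)⁻¹) with hG
  have hev : ∀ y : (EuclideanSpace ℝ (Fin n)), (fun x => fderiv ℝ w x y) =ᶠ[nhds c] G y := by
    intro y
    filter_upwards [compl_singleton_mem_nhds hc0] with x hx
    exact fA x hx y
  have key : ∀ y z : (EuclideanSpace ℝ (Fin n)), fderiv ℝ (fun x => fderiv ℝ w x y) c z =
      (1 / ‖c‖) * (6 * ⟪mul c y, z⟫ - ⟪y, z⟫ - 3 / ‖c‖ ^ 2 * ⟪c, y⟫ * ⟪c, z⟫) := by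
    intro y z
    rw [(hev y).fderiv_eq]
    have h1 : HasFDerivAt (fun x : (EuclideanSpace ℝ (Fin n)) => ⟪mul x x, y⟫)
        ((fderivInnerCLM ℝ (mul c c, y)).comp ((Dsq c).prod 0)) c :=
      (hsq c).inner ℝ (hasFDerivAt_const y c)
    have h6 : HasFDerivAt (fun x : (EuclideanSpace ℝ (Fin n)) => ⟪x, y⟫)
        ((fderivInnerCLM ℝ (c, y)).comp ((ContinuousLinearMap.id ℝ (EuclideanSpace ℝ (Fin n))).prod 0)) c :=
      (hasFDerivAt_id c).inner ℝ (hasFDerivAt_const y c)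
    have h3 := hNi c hc0
    have hGd := ((h1.const_mul 3).mul h3).sub (((hu c).mul h6).mul ((h3.mul h3).mul h3))
    rw [hG, HasFDerivAt.fderiv (f := fun x => 3 * ⟪mul x x, y⟫ * (‖x‖)⁻¹
          - ⟪mul x x, x⟫ * ⟪x, y⟫ * ((‖x‖)⁻¹ * (‖x‖)⁻¹ * (‖x‖)⁻¹)) hGd]
    have h0 : ‖c‖ ≠ 0 := norm_ne_zero_iff.mpr hc0
    have e2 : ∀ a : (EuclideanSpace ℝ (Fin n)), ⟪mul c z, a⟫ = ⟪mul c a, z⟫ := by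
      intro a
      rw [hcomm c z, hassoc, real_inner_comm]
    have e3 : ∀ a : (EuclideanSpace ℝ (Fin n)), ⟪mul z c, a⟫ = ⟪mul c a, z⟫ := by
      intro a
      rw [hassoc, real_inner_comm]
    have euc : ⟪c, c⟫ = ‖c‖ ^ 2 := real_inner_self_eq_norm_sq c
    simp only [ContinuousLinearMap.add_apply, ContinuousLinearMap.smul_apply,
      ContinuousLinearMap.comp_apply, ContinuousLinearMap.prod_apply,
      ContinuousLinearMap.coe_id', id_eq, fderivInnerCLM_apply, innerSL_apply_apply,
      ContinuousLinearMap.sub_apply, ContinuousLinearMap.zero_apply,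
      smul_eq_mul, hDsq, Pi.mul_apply, hsq_ap, inner_add_left, inner_zero_right, hc, e2, e3, euc,
      real_inner_comm z y, real_inner_comm y c, real_inner_comm z c]
    field_simp
    ring
  refine ⟨key, ?_, ?_⟩
  · intro z
    rw [key c z, hc, real_inner_self_eq_norm_sq]
    have h0 : ‖c‖ ≠ 0 := norm_ne_zero_iff.mpr hc0
    field_simp
    ring
  · intro v lam hvc hcv z
    have hcv0 : ⟪c, v⟫ = 0 := by rw [real_inner_comm]; exact hvc
    rw [key v z, hcv, real_inner_smul_left, hcv0]
    have h0 : ‖c‖ ≠ 0 := norm_ne_zero_iff.mpr hc0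
    field_simp
    ring
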